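/- Let d = 2k+1 be odd, n ≥ d, and let F_{d,n}(x_1,…,x_n) = Σ_{I ⊆ [n], |I| ≤ k} (-1)^{|I|} C(n-k-|I|-1, k-|I|) (δ(I,1)x_1 + ⋯ + δ(I,n)x_n)^d. Then substituting x_n = 0 yields F_{d,n}(x_1,…,x_{n-1},0) = F_{d,n-1}(x_1,…,x_{n-1}). -/

import Mathlib

open Finset

lemma sum_powerset_map' {α β M : Type*} [AddCommMonoid M] (s : Finset α) (e : α ↪ β)
    (f : Finset β → M) :
    ∑ t ∈ (s.map e).powerset, f t = ∑ t ∈ s.powerset, f (t.map e) := by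
  classical
  induction s using Finset.induction_on generalizing f with
  | empty => simp
  | @insert a s h ih =>
    have ha' : e a ∉ s.map e := by
      intro hmem
      obtain ⟨b, hb, hba⟩ := Finset.mem_map.1 hmem
      exact h (by rwa [e.injective hba] at hb)
    rw [Finset.map_insert, Finset.sum_powerset_insert ha', Finset.sum_powerset_insert h, ih f,
      ih (fun t => f (insert (e a) t))]
    congr 1
    exact Finset.sum_congr rfl fun t _ => by rw [Finset.map_insert]

/-- The expression `F_{d,n}` (depending on `k`, where `d = 2k+1`): the candidate power sum
decomposition of `2^(d-1) d! σ_{d,n}`, as a function of the variables `x : Fin n → ℂ`. -/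
noncomputable def Fdn (d k n : ℕ) (x : Fin n → ℂ) : ℂ :=
  ∑ I ∈ (Finset.univ : Finset (Fin n)).powerset.filter (fun I => I.card ≤ k),
    (-1 : ℂ) ^ I.card * ((n - k - I.card - 1).choose (k - I.card) : ℂ) *
      (∑ i, (if i ∈ I then (-1 : ℂ) else 1) * x i) ^ d

/-- Key recursion: for odd `d = 2k+1` and `n = m+1 ≥ d`, substituting `x_n = 0` in `F_{d,n}`
yields `F_{d,n-1}`. -/
theorem Fdn_snoc_zero (d k m : ℕ) (hd : d = 2 * k + 1) (hn : d ≤ m + 1) :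
    ∀ x : Fin m → ℂ, Fdn d k (m + 1) (Fin.snoc x 0) = Fdn d k m x := by
  intro x
  have hm : 2 * k ≤ m := by omega
  classical
  unfold Fdn
  rw [Finset.sum_filter, Finset.sum_filter]
  have hlast : Fin.last m ∉ (univ : Finset (Fin m)).map Fin.castSuccEmb := by
    intro hmem
    obtain ⟨b, -, hb⟩ := Finset.mem_map.1 hmem
    exact (Fin.castSucc_lt_last b).ne hb
  have huniv : (univ : Finset (Fin (m + 1)))
      = insert (Fin.last m) ((univ : Finset (Fin m)).map Fin.castSuccEmb) := by
    rw [Fin.univ_castSuccEmb]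
    simp [Finset.cons_eq_insert]
  rw [huniv, Finset.sum_powerset_insert hlast, sum_powerset_map', sum_powerset_map',
    ← Finset.sum_add_distrib, ← huniv]
  refine Finset.sum_congr rfl fun J _ => ?_
  -- the linear forms agree
  have hLmap : ∀ I : Finset (Fin (m + 1)),
      (∑ i : Fin (m + 1), (if i ∈ I then (-1 : ℂ) else 1) * (Fin.snoc x 0 : Fin (m + 1) → ℂ) i)
        = ∑ i : Fin m, (if i.castSucc ∈ I then (-1 : ℂ) else 1) * x i := by
    intro I
    rw [Fin.sum_univ_castSucc]
    simp [Fin.snoc_castSucc, Fin.snoc_last]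
  have hL1 : (∑ i, (if i ∈ J.map Fin.castSuccEmb then (-1 : ℂ) else 1) * (Fin.snoc x 0 : Fin (m + 1) → ℂ) i)
      = ∑ i, (if i ∈ J then (-1 : ℂ) else 1) * x i := by
    rw [hLmap]
    refine Finset.sum_congr rfl fun i _ => ?_
    have hmm : i.castSucc ∈ J.map Fin.castSuccEmb ↔ i ∈ J := Finset.mem_map' _
    simp only [hmm]
  have hL2 : (∑ i, (if i ∈ insert (Fin.last m) (J.map Fin.castSuccEmb) then (-1 : ℂ) else 1)
      * (Fin.snoc x 0 : Fin (m + 1) → ℂ) i) = ∑ i, (if i ∈ J then (-1 : ℂ) else 1) * x i := by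
    rw [hLmap]
    refine Finset.sum_congr rfl fun i _ => ?_
    have hmm : i.castSucc ∈ J.map Fin.castSuccEmb ↔ i ∈ J := Finset.mem_map' _
    simp only [Finset.mem_insert, hmm, (Fin.castSucc_lt_last i).ne, false_or]
  rw [hL1, hL2]
  have hcard1 : (J.map Fin.castSuccEmb).card = J.card := Finset.card_map _
  have hJlast : Fin.last m ∉ J.map Fin.castSuccEmb := by
    intro hmem
    obtain ⟨b, -, hb⟩ := Finset.mem_map.1 hmem
    exact (Fin.castSucc_lt_last b).ne hb
  have hcard2 : (insert (Fin.last m) (J.map Fin.castSuccEmb)).card = J.card + 1 := by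
    rw [Finset.card_insert_of_notMem hJlast, hcard1]
  rw [hcard1, hcard2]
  set j := J.card with hj
  set L := ∑ i, (if i ∈ J then (-1 : ℂ) else 1) * x i with hL
  by_cases h1 : j + 1 ≤ k
  · have h2 : j ≤ k := by omega
    rw [if_pos h2, if_pos h1, if_pos h2]
    have e1 : m + 1 - k - j - 1 = (m - k - j - 1) + 1 := by omega
    have e2 : k - j = (k - j - 1) + 1 := by omega
    have e3 : m + 1 - k - (j + 1) - 1 = m - k - j - 1 := by omega
    have e4 : k - (j + 1) = k - j - 1 := by omega
    have hch : ((m - k - j - 1) + 1).choose ((k - j - 1) + 1)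
        = (m - k - j - 1).choose (k - j - 1) + (m - k - j - 1).choose ((k - j - 1) + 1) :=
      Nat.choose_succ_succ _ _
    rw [e1, e2, e3, e4, hch]
    push_cast
    ring
  · by_cases h2 : j ≤ k
    · have hjk : j = k := by omega
      rw [if_pos h2, if_neg h1, add_zero]
      have e2 : k - j = 0 := by omega
      rw [e2, Nat.choose_zero_right, Nat.choose_zero_right, if_pos h2]
    · rw [if_neg h2, if_neg h1, if_neg h2, add_zero]
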